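/- Let H be a finite group with a Sylow 2-subgroup P that is a T.I. subgroup (i.e., P ∩ P^h = 1 for all h ∈ H \ N_H(P)). If N_H(P) is 2-nilpotent, then H is 2-nilpotent. -/

import Mathlib

/-- `G` is `p`-nilpotent: it has a normal Hall `p'`-subgroup. -/
def IsPNilpotent (p : ℕ) (G : Type*) [Group G] : Prop :=
  ∃ H : Subgroup G, H.Normal ∧ (Nat.card H).Coprime p ∧ ∃ n : ℕ, H.index = p ^ n

open Subgroup MonoidHom MulAction Function

lemma commutator_ne_top_of_nilpotent (G : Type*) [Group G] [hnt : Nontrivial G]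
    [hn : Group.IsNilpotent G] : commutator G ≠ ⊤ := by
  intro h
  have key : ∀ n, Subgroup.lowerCentralSeries (⊤ : Subgroup G) n = ⊤ := by
    intro n
    induction n with
    | zero => rfl
    | succ n ih =>
      have : Subgroup.lowerCentralSeries (⊤ : Subgroup G) (n+1) = ⁅Subgroup.lowerCentralSeries (⊤ : Subgroup G) n, ⊤⁆ := rfl
      rw [this, ih, ← commutator_def, h]
  obtain ⟨n, hn⟩ := Subgroup.nilpotent_iff_lowerCentralSeries.mp hn
  obtain ⟨x, y, hxy⟩ := hnt
  have hx : x ∈ (⊥ : Subgroup G) := by rw [← hn, key n]; exact mem_top x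
  have hy : y ∈ (⊥ : Subgroup G) := by rw [← hn, key n]; exact mem_top y
  simp_all [Subgroup.mem_bot]

lemma nontrivial_abelianization_of_pgroup {p : ℕ} [Fact p.Prime] (G : Type*) [Group G]
    [Finite G] [Nontrivial G] (hG : IsPGroup p G) : Nontrivial (Abelianization G) := by
  haveI : Group.IsNilpotent G := hG.isNilpotent
  have h := commutator_ne_top_of_nilpotent G
  rcases subsingleton_or_nontrivial (Abelianization G) with hs | hnt
  · exfalso
    apply h
    rw [← Subgroup.index_eq_one]
    have : Nat.card (G ⧸ commutator G) = 1 :=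
      Nat.card_eq_one_iff_unique.mpr ⟨hs, ⟨1⟩⟩
    exact this
  · exact hnt

lemma transfer_abelianization_eq_pow {G : Type*} [Group G] [Finite G] (P : Subgroup G)
    (key : ∀ (g : G) (k : ℕ) (x : G), g ∈ P → x⁻¹ * g ^ k * x ∈ P →
      ∃ u ∈ P, x⁻¹ * g ^ k * x = u⁻¹ * g ^ k * u)
    (g : G) (hg : g ∈ P) :
    transfer (Abelianization.of (G := ↥P)) g = (Abelianization.of ⟨g, hg⟩) ^ P.index := by
  classical
  haveI : FiniteIndex P := ⟨by
    have := Subgroup.index_ne_zero_of_finite (H := P)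
    exact this⟩
  haveI : Fintype (G ⧸ P) := Fintype.ofFinite _
  haveI : Fintype (Quotient (orbitRel (zpowers g) (G ⧸ P))) := Fintype.ofFinite _
  rw [transfer_eq_prod_quotient_orbitRel_zpowers_quot]
  have step : ∀ q : Quotient (orbitRel (zpowers g) (G ⧸ P)),
      Abelianization.of
        (⟨q.out.out⁻¹ * g ^ Function.minimalPeriod (g • ·) q.out * q.out.out,
          QuotientGroup.out_conj_pow_minimalPeriod_mem P g q.out⟩ : ↥P)
        = (Abelianization.of (⟨g, hg⟩ : ↥P)) ^ Function.minimalPeriod (g • ·) q.out := by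
    intro q
    obtain ⟨u, hu, he⟩ := key g (Function.minimalPeriod (g • ·) q.out) q.out.out hg
      (QuotientGroup.out_conj_pow_minimalPeriod_mem P g q.out)
    have h2 : (⟨q.out.out⁻¹ * g ^ Function.minimalPeriod (g • ·) q.out * q.out.out,
          QuotientGroup.out_conj_pow_minimalPeriod_mem P g q.out⟩ : ↥P)
        = (⟨u, hu⟩ : ↥P)⁻¹ * (⟨g, hg⟩ : ↥P) ^ Function.minimalPeriod (g • ·) q.out * ⟨u, hu⟩ :=
      Subtype.ext (by push_cast; exact he)
    rw [h2, map_mul, map_mul, map_inv, map_pow, mul_comm, ← mul_assoc, mul_inv_cancel, one_mul]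
  rw [Finset.prod_congr rfl fun q _ => step q, Finset.prod_pow_eq_pow_sum]
  congr 1
  simp only [minimalPeriod_eq_card]
  rw [index_eq_card, Nat.card_eq_fintype_card,
    Fintype.card_congr (selfEquivSigmaOrbits (zpowers g) (G ⧸ P)), Fintype.card_sigma]
  rfl

lemma IsPNilpotent.of_mulEquiv {p : ℕ} {G G' : Type*} [Group G] [Group G'] (e : G ≃* G')
    (h : IsPNilpotent p G) : IsPNilpotent p G' := by
  obtain ⟨K, hn, hc, n, hi⟩ := h
  refine ⟨K.map e.toMonoidHom, hn.map _ e.surjective, ?_, n, ?_⟩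
  · rwa [Nat.card_congr (K.equivMapOfInjective e.toMonoidHom e.injective).toEquiv.symm]
  · rw [K.index_map_of_injective (f := e.toMonoidHom) e.injective,
      MonoidHom.range_eq_top.mpr e.surjective, Subgroup.index_top, mul_one]
    exact hi

lemma IsPNilpotent.subgroup {p : ℕ} (hp : p.Prime) {G : Type*} [Group G] (S : Subgroup G)
    (h : IsPNilpotent p G) : IsPNilpotent p ↥S := by
  obtain ⟨K, hn, hc, n, hi⟩ := h
  refine ⟨K.subgroupOf S, inferInstance, ?_, ?_⟩
  · refine Nat.Coprime.coprime_dvd_left ?_ hc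
    have : Nat.card (K.subgroupOf S) = Nat.card ((K.subgroupOf S).map S.subtype) :=
      Nat.card_congr ((K.subgroupOf S).equivMapOfInjective S.subtype S.subtype_injective).toEquiv
    rw [this]
    exact Subgroup.card_dvd_of_le (by
      rintro x ⟨y, hy, rfl⟩
      exact hy)
  · have hdvd : (K.subgroupOf S).index ∣ p ^ n := by
      rw [← hi]
      exact Subgroup.relIndex_dvd_index_of_normal K S
    obtain ⟨m, _, hm⟩ := (Nat.dvd_prime_pow hp).mp hdvd
    exact ⟨m, hm⟩

lemma mem_iff_coprime_orderOf {p : ℕ} {G : Type*} [Group G] [Finite G] {K : Subgroup G} [K.Normal]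
    (hc : (Nat.card K).Coprime p) {n : ℕ} (hi : K.index = p ^ n) (x : G) :
    x ∈ K ↔ (orderOf x).Coprime p := by
  constructor
  · intro hx
    refine Nat.Coprime.coprime_dvd_left ?_ hc
    rw [← Subgroup.orderOf_mk x hx]
    exact orderOf_dvd_natCard _
  · intro hx
    have h1 : orderOf ((QuotientGroup.mk' K) x) ∣ orderOf x := orderOf_map_dvd _ x
    have h2 : orderOf ((QuotientGroup.mk' K) x) ∣ p ^ n := by
      rw [← hi, Subgroup.index_eq_card]
      exact orderOf_dvd_natCard _
    have h3 : orderOf ((QuotientGroup.mk' K) x) = 1 :=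
      Nat.eq_one_of_dvd_coprimes (Nat.Coprime.pow_right n hx) h1 h2
    rw [orderOf_eq_one_iff] at h3
    exact (QuotientGroup.eq_one_iff x).mp h3

lemma isPNilpotent_of_normal {p : ℕ} {G : Type*} [Group G] [Finite G] (H₀ : Subgroup G)
    [hnorm : H₀.Normal] (ha : ∃ a : ℕ, H₀.index = p ^ a)
    (h : ∃ K : Subgroup ↥H₀, K.Normal ∧ (Nat.card K).Coprime p ∧ ∃ n : ℕ, K.index = p ^ n) :
    ∃ K : Subgroup G, K.Normal ∧ (Nat.card K).Coprime p ∧ ∃ n : ℕ, K.index = p ^ n := by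
  obtain ⟨a, ha⟩ := ha
  obtain ⟨K₀, hn₀, hc₀, b, hb⟩ := h
  refine ⟨K₀.map H₀.subtype, ?_, ?_, ?_⟩
  · -- characterization
    have char : ∀ x : G, x ∈ K₀.map H₀.subtype ↔ x ∈ H₀ ∧ (orderOf x).Coprime p := by
      intro x
      constructor
      · rintro ⟨y, hy, rfl⟩
        refine ⟨y.2, ?_⟩
        rw [show ((H₀.subtype) y : G) = (y : G) from rfl, Subgroup.orderOf_coe]
        exact (mem_iff_coprime_orderOf hc₀ hb y).mp hy
      · rintro ⟨hx, hord⟩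
        exact ⟨⟨x, hx⟩, (mem_iff_coprime_orderOf hc₀ hb _).mpr
          (by rwa [Subgroup.orderOf_mk]), rfl⟩
    constructor
    intro x hx g
    rw [char] at hx ⊢
    refine ⟨hnorm.conj_mem x hx.1 g, ?_⟩
    have : g * x * g⁻¹ = (MulAut.conj g).toMonoidHom x := rfl
    rw [this, orderOf_injective _ (MulAut.conj g).injective]
    exact hx.2
  · rw [Nat.card_congr (K₀.equivMapOfInjective H₀.subtype H₀.subtype_injective).toEquiv.symm]
    exact hc₀
  · refine ⟨b + a, ?_⟩
    have hle : K₀.map H₀.subtype ≤ H₀ := by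
      rintro x ⟨y, hy, rfl⟩
      exact y.2
    rw [← Subgroup.relIndex_mul_index hle, ha, pow_add]
    congr 1
    show ((K₀.map H₀.subtype).subgroupOf H₀).index = p ^ b
    rw [show (K₀.map H₀.subtype).subgroupOf H₀ = K₀ from
      Subgroup.comap_map_eq_self_of_injective H₀.subtype_injective K₀]
    exact hb

lemma TI_fusion {H : Type*} [Group H] [Finite H] (P : Sylow 2 H)
    (hTI : ∀ h : H, h ∉ Subgroup.normalizer ((P : Subgroup H) : Set H) →
      (P : Subgroup H) ⊓ (P : Subgroup H).map (MulAut.conj h : H →* H) = ⊥)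
    (hN : ∃ K : Subgroup ↥(Subgroup.normalizer ((P : Subgroup H) : Set H)), K.Normal ∧
      (Nat.card K).Coprime 2 ∧ ∃ n : ℕ, K.index = 2 ^ n)
    (g : H) (k : ℕ) (x : H) (hg : g ∈ (P : Subgroup H))
    (hx : x⁻¹ * g ^ k * x ∈ (P : Subgroup H)) :
    ∃ u ∈ (P : Subgroup H), x⁻¹ * g ^ k * x = u⁻¹ * g ^ k * u := by
  haveI : Fact (Nat.Prime 2) := ⟨Nat.prime_two⟩
  set N := Subgroup.normalizer ((P : Subgroup H) : Set H) with hNdef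
  obtain ⟨K, hKn, hKc, n, hKi⟩ := hN
  set Q := (P : Subgroup H).subgroupOf N with hQdef
  haveI : Q.Normal := Subgroup.normal_in_normalizer
  set y := g ^ k with hydef
  have hy : y ∈ (P : Subgroup H) := Subgroup.pow_mem _ hg k
  by_cases hy1 : y = 1
  · exact ⟨1, Subgroup.one_mem _, by simp [hy1]⟩
  -- x normalizes P
  have hxN : x ∈ N := by
    by_contra hxN
    have h1 : y ∈ (P : Subgroup H) ⊓ (P : Subgroup H).map (MulAut.conj x : H →* H) := by
      refine ⟨hy, ⟨x⁻¹ * y * x, hx, ?_⟩⟩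
      simp [MulAut.conj_apply, mul_assoc]
    rw [hTI x hxN] at h1
    exact hy1 h1
  -- trivial intersection of Q and K
  have hQK : Q ⊓ K = ⊥ := by
    rw [Subgroup.eq_bot_iff_forall]
    intro z hz
    obtain ⟨m, hm⟩ := (P.2.of_equiv (Subgroup.subgroupOfEquivOfLe
      (Subgroup.le_normalizer (H := (P : Subgroup H)))).symm) ⟨z, hz.1⟩
    have horder : orderOf z ∣ 2 ^ m := by
      rw [← Subgroup.orderOf_mk z hz.1] at *
      exact orderOf_dvd_of_pow_eq_one (by exact_mod_cast congrArg Subtype.val hm)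
    have horder2 : orderOf z ∣ Nat.card K := by
      rw [← Subgroup.orderOf_mk z hz.2]
      exact orderOf_dvd_natCard _
    have : orderOf z = 1 :=
      Nat.eq_one_of_dvd_coprimes (Nat.Coprime.pow_left m hKc.symm) horder horder2
    rwa [orderOf_eq_one_iff] at this
  -- K centralizes P
  have hKC : ∀ kk : ↥N, kk ∈ K → ∀ q : ↥N, q ∈ Q → kk⁻¹ * q * kk = q := by
    intro kk hkk q hq
    have hq' : kk⁻¹ * q * kk ∈ Q := by
      have := this.conj_mem q hq kk⁻¹
      simpa [mul_assoc] using this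
    have : (kk⁻¹ * q * kk) * q⁻¹ ∈ Q ⊓ K := by
      refine ⟨Q.mul_mem hq' (Q.inv_mem hq), ?_⟩
      have h1 : QuotientGroup.mk' K ((kk⁻¹ * q * kk) * q⁻¹) = 1 := by
        have hkk1 : QuotientGroup.mk' K kk = 1 := (QuotientGroup.eq_one_iff kk).mpr hkk
        simp [map_mul, map_inv, hkk1]
      exact (QuotientGroup.eq_one_iff _).mp h1
    rw [hQK, Subgroup.mem_bot] at this
    exact mul_inv_eq_one.mp this
  -- N = Q * K
  have hNQK : ∀ nb : ↥N, ∃ u ∈ Q, ∃ kk ∈ K, nb = u * kk := by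
    have hsurj : Q.map (QuotientGroup.mk' K) = ⊤ := by
      apply Subgroup.eq_top_of_card_eq
      have hinj : Function.Injective ((QuotientGroup.mk' K).comp Q.subtype) := by
        rw [← MonoidHom.ker_eq_bot_iff, Subgroup.eq_bot_iff_forall]
        intro z hz
        rw [MonoidHom.mem_ker, MonoidHom.comp_apply] at hz
        have : (z : ↥N) ∈ Q ⊓ K := ⟨z.2, (QuotientGroup.eq_one_iff _).mp hz⟩
        rw [hQK, Subgroup.mem_bot] at this
        exact Subtype.ext this
      have hmapeq : Q.map (QuotientGroup.mk' K) = ((QuotientGroup.mk' K).comp Q.subtype).range := by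
        rw [MonoidHom.range_comp, Subgroup.range_subtype]
      have hcard1 : Nat.card (Q.map (QuotientGroup.mk' K)) = Nat.card Q := by
        rw [hmapeq]
        exact Nat.card_congr (Equiv.ofInjective _ hinj).symm
      have hcardQ : Nat.card Q = Nat.card (P : Subgroup H) :=
        Nat.card_congr (Subgroup.subgroupOfEquivOfLe
          (Subgroup.le_normalizer (H := (P : Subgroup H)))).toEquiv
      -- card of quotient is 2 ^ n
      have hcardquot : Nat.card (↥N ⧸ K) = 2 ^ n := by rw [← hKi]; rfl
      -- 2 ^ n divides card P
      have hdvd1 : (2 : ℕ) ^ n ∣ Nat.card (P : Subgroup H) := by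
        have h1 : (2 : ℕ) ^ n ∣ Nat.card ↥N := by
          rw [← hKi]; exact Subgroup.index_dvd_card K
        have h2 : Nat.card ↥N ∣ Nat.card H := Subgroup.card_subgroup_dvd_card N
        have h3 : (2 : ℕ) ^ n ∣ Nat.card (P : Subgroup H) * (P : Subgroup H).index :=
          (h1.trans h2).trans (dvd_of_eq (Subgroup.card_mul_index _).symm)
        haveI : (P : Subgroup H).FiniteIndex := ⟨Subgroup.index_ne_zero_of_finite⟩
        exact Nat.Coprime.dvd_of_dvd_mul_right
          (Nat.Coprime.pow_left n ((Nat.Prime.coprime_iff_not_dvd Nat.prime_two).mpr P.not_dvd_index)) h3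
      have hdvd2 : Nat.card (Q.map (QuotientGroup.mk' K)) ∣ 2 ^ n :=
        hcardquot ▸ Subgroup.card_subgroup_dvd_card _
      rw [hcard1, hcardQ] at hdvd2
      rw [hcard1, hcardQ, hcardquot]
      exact Nat.dvd_antisymm hdvd2 hdvd1
    intro nb
    have : QuotientGroup.mk' K nb ∈ Q.map (QuotientGroup.mk' K) := by
      rw [hsurj]; trivial
    obtain ⟨u, hu, heq⟩ := this
    refine ⟨u, hu, u⁻¹ * nb, ?_, by group⟩
    have : QuotientGroup.mk' K (u⁻¹ * nb) = 1 := by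
      rw [map_mul, map_inv, heq, inv_mul_cancel]
    exact (QuotientGroup.eq_one_iff _).mp this
  -- decompose x and conclude
  obtain ⟨u, hu, kk, hkk, hdec⟩ := hNQK ⟨x, hxN⟩
  have hu' : (u : H) ∈ (P : Subgroup H) := Subgroup.mem_subgroupOf.mp hu
  refine ⟨(u : H), hu', ?_⟩
  have hz : (u : H)⁻¹ * y * (u : H) ∈ (P : Subgroup H) := by
    have h2 := Subgroup.mem_normalizer_iff.mp (N.inv_mem u.2)
    have h3 := (h2 y).mp hy
    rwa [inv_inv] at h3
  have hcent := hKC kk hkk ⟨(u : H)⁻¹ * y * (u : H), Subgroup.le_normalizer hz⟩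
    (Subgroup.mem_subgroupOf.mpr hz)
  have hcent' : (kk : H)⁻¹ * ((u : H)⁻¹ * y * (u : H)) * (kk : H)
      = (u : H)⁻¹ * y * (u : H) := by
    have := congrArg (Subtype.val) hcent
    simpa using this
  have hx' : x = (u : H) * (kk : H) := by
    have := congrArg (Subtype.val) hdec
    simpa using this
  rw [hx']
  calc ((u : H) * (kk : H))⁻¹ * y * ((u : H) * (kk : H))
      = (kk : H)⁻¹ * ((u : H)⁻¹ * y * (u : H)) * (kk : H) := by group
    _ = (u : H)⁻¹ * y * (u : H) := hcent'


theorem twoNilpotent_aux : ∀ (n : ℕ) (H : Type*) [Group H] [Finite H], Nat.card H = n →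
    ∀ (P : Sylow 2 H),
    (∀ h : H, h ∉ Subgroup.normalizer ((P : Subgroup H) : Set H) →
      (P : Subgroup H) ⊓ (P : Subgroup H).map (MulAut.conj h : H →* H) = ⊥) →
    (∃ K : Subgroup ↥(Subgroup.normalizer ((P : Subgroup H) : Set H)), K.Normal ∧
      (Nat.card K).Coprime 2 ∧ ∃ m : ℕ, K.index = 2 ^ m) →
    ∃ K : Subgroup H, K.Normal ∧ (Nat.card K).Coprime 2 ∧ ∃ m : ℕ, K.index = 2 ^ m := by
  intro n
  induction n using Nat.strong_induction_on with
  | _ n ih =>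
  intro H _ _ hcard P hTI hN
  haveI : Fact (Nat.Prime 2) := ⟨Nat.prime_two⟩
  by_cases hbot : (P : Subgroup H) = ⊥
  · -- `H` has odd order
    have hcardP : Nat.card (P : Subgroup H) = 2 ^ (Nat.card H).factorization 2 :=
      P.card_eq_multiplicity
    have h1 : Nat.card (P : Subgroup H) = 1 := by rw [hbot]; exact Subgroup.card_bot
    have hodd : ¬ (2 : ℕ) ∣ Nat.card H := by
      intro hdvd
      have hpos := (Nat.Prime.factorization_pos_of_dvd Nat.prime_two Nat.card_pos.ne' hdvd)
      rw [h1] at hcardP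
      have h2 : (2 : ℕ) ∣ 1 := hcardP ▸ dvd_pow_self 2 hpos.ne'
      omega
    refine ⟨⊤, inferInstance, ?_, 0, by rw [Subgroup.index_top, pow_zero]⟩
    rw [Subgroup.card_top]
    exact ((Nat.Prime.coprime_iff_not_dvd Nat.prime_two).mpr hodd).symm
  · haveI : Nontrivial ↥(P : Subgroup H) := (Subgroup.nontrivial_iff_ne_bot _).mpr hbot
    haveI : (P : Subgroup H).FiniteIndex := ⟨Subgroup.index_ne_zero_of_finite⟩
    set τ : H →* Abelianization ↥(P : Subgroup H) :=
      MonoidHom.transfer (Abelianization.of (G := ↥(P : Subgroup H))) with hτ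
    have heval : ∀ (g : H) (hg : g ∈ (P : Subgroup H)),
        τ g = (Abelianization.of ⟨g, hg⟩) ^ (P : Subgroup H).index := fun g hg =>
      transfer_abelianization_eq_pow _
        (fun g k x hg hx => TI_fusion P hTI hN g k x hg hx) g hg
    have hAb : IsPGroup 2 (Abelianization ↥(P : Subgroup H)) :=
      IsPGroup.to_quotient P.2 (commutator _)
    haveI : Finite (Abelianization ↥(P : Subgroup H)) := Quotient.finite _
    have hofsurj : Function.Surjective (Abelianization.of (G := ↥(P : Subgroup H))) :=
      fun z => Quotient.exists_rep z
    have hsurj : Function.Surjective τ := by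
      intro z
      obtain ⟨w, hw⟩ := (hAb.powEquiv' (n := (P : Subgroup H).index) P.not_dvd_index).surjective z
      obtain ⟨v, hv⟩ := hofsurj w
      refine ⟨(v : H), ?_⟩
      rw [heval (v : H) v.2, ← hw, IsPGroup.powEquiv_apply,
        show (⟨(v : H), v.2⟩ : ↥(P : Subgroup H)) = v from rfl, hv]
    -- the kernel of the transfer map
    set H₀ : Subgroup H := τ.ker with hH₀
    haveI : H₀.Normal := MonoidHom.normal_ker τ
    have hindex : H₀.index = Nat.card (Abelianization ↥(P : Subgroup H)) := by
      rw [Subgroup.index_eq_card]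
      exact Nat.card_congr (QuotientGroup.quotientKerEquivOfSurjective τ hsurj).toEquiv
    obtain ⟨a, ha⟩ : ∃ a : ℕ, H₀.index = 2 ^ a := by
      obtain ⟨a, ha⟩ := IsPGroup.iff_card.mp hAb
      exact ⟨a, by rw [hindex, ha]⟩
    -- the index is nontrivial
    haveI : Nontrivial (Abelianization ↥(P : Subgroup H)) :=
      nontrivial_abelianization_of_pgroup _ P.2
    have hlt : Nat.card ↥H₀ < n := by
      have h1 : Nat.card ↥H₀ * H₀.index = Nat.card H := Subgroup.card_mul_index H₀
      have h2 : 1 < H₀.index := by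
        rw [hindex]
        exact Finite.one_lt_card_iff_nontrivial.mpr inferInstance
      have h3 : 0 < Nat.card ↥H₀ := Nat.card_pos
      calc Nat.card ↥H₀ < Nat.card ↥H₀ * H₀.index := by nlinarith
        _ = n := by rw [h1, hcard]
    -- the Sylow subgroup of H₀
    have hrelind : ((P : Subgroup H).subgroupOf H₀).index = (P : Subgroup H).index := by
      have hmap : (P : Subgroup H).map τ = ⊤ := by
        rw [eq_top_iff]
        rintro z -
        obtain ⟨v, hv⟩ := hofsurj ((hAb.powEquiv' (n := (P : Subgroup H).index)
          P.not_dvd_index).symm z)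
        refine ⟨(v : H), v.2, ?_⟩
        have happ := (hAb.powEquiv' (n := (P : Subgroup H).index)
          P.not_dvd_index).apply_symm_apply z
        rw [IsPGroup.powEquiv_apply] at happ
        rw [heval (v : H) v.2,
          show (⟨(v : H), v.2⟩ : ↥(P : Subgroup H)) = v from rfl, hv]
        exact happ
      have hker : H₀.relIndex (P : Subgroup H) = H₀.index := by
        have h1 : H₀.relIndex (P : Subgroup H) = Nat.card ((P : Subgroup H).map τ) :=
          Subgroup.relIndex_ker (K := (P : Subgroup H)) τ
        rw [h1, hmap, Subgroup.card_top, hindex]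
      have e1 : (H₀ ⊓ (P : Subgroup H)).relIndex (P : Subgroup H) * (P : Subgroup H).index
          = (H₀ ⊓ (P : Subgroup H)).index :=
        Subgroup.relIndex_mul_index inf_le_right
      have e2 : ((P : Subgroup H) ⊓ H₀).relIndex H₀ * H₀.index
          = ((P : Subgroup H) ⊓ H₀).index :=
        Subgroup.relIndex_mul_index inf_le_right
      rw [Subgroup.inf_relIndex_right, hker] at e1
      rw [Subgroup.inf_relIndex_right] at e2
      have einf : ((P : Subgroup H) ⊓ H₀).index = (H₀ ⊓ (P : Subgroup H)).index := by
        rw [inf_comm]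
      have hkey : (P : Subgroup H).relIndex H₀ * H₀.index
          = (P : Subgroup H).index * H₀.index := by
        rw [e2, einf, ← e1, mul_comm]
      have hne : 0 < H₀.index := Nat.pos_of_ne_zero Subgroup.index_ne_zero_of_finite
      have : (P : Subgroup H).relIndex H₀ = (P : Subgroup H).index :=
        Nat.eq_of_mul_eq_mul_right hne hkey
      exact this
    by_cases hPH₀ : (P : Subgroup H).subgroupOf H₀ = ⊥
    · -- `H₀` has odd order and is itself the normal 2-complement
      have hcardH₀ : Nat.card ↥H₀ = (P : Subgroup H).index := by
        have : ((P : Subgroup H).subgroupOf H₀).index = Nat.card ↥H₀ := by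
          rw [hPH₀, Subgroup.index_bot]
        rw [← this, hrelind]
      have hoddH₀ : (Nat.card ↥H₀).Coprime 2 := by
        rw [hcardH₀]
        exact ((Nat.Prime.coprime_iff_not_dvd Nat.prime_two).mpr P.not_dvd_index).symm
      exact ⟨H₀, inferInstance, hoddH₀, a, ha⟩
    · -- the Sylow 2-subgroup of H₀
      have hpgroup : IsPGroup 2 ↥((P : Subgroup H).subgroupOf H₀) := by
        intro g
        obtain ⟨k, hk⟩ := P.2 ⟨((g : ↥H₀) : H), g.2⟩
        refine ⟨k, Subtype.ext (Subtype.ext ?_)⟩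
        have := congrArg Subtype.val hk
        push_cast at this ⊢
        exact this
      have hndvd : ¬ 2 ∣ ((P : Subgroup H).subgroupOf H₀).index := by
        rw [hrelind]; exact P.not_dvd_index
      set P₀ : Sylow 2 ↥H₀ := hpgroup.toSylow hndvd with hP₀
      have hP₀coe : (P₀ : Subgroup ↥H₀) = (P : Subgroup H).subgroupOf H₀ := rfl
      -- the TI property descends to H₀
      have hTI₀ : ∀ h : ↥H₀, h ∉ Subgroup.normalizer ((P₀ : Subgroup ↥H₀) : Set ↥H₀) →
          (P₀ : Subgroup ↥H₀) ⊓ (P₀ : Subgroup ↥H₀).map (MulAut.conj h : ↥H₀ →* ↥H₀) = ⊥ := by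
        intro h hh
        rw [Subgroup.eq_bot_iff_forall]
        intro x hx
        obtain ⟨hx1, y, hy, hyx⟩ := hx
        have hhH : (h : H) ∉ Subgroup.normalizer ((P : Subgroup H) : Set H) := by
          intro hmem
          apply hh
          rw [Subgroup.mem_normalizer_iff] at hmem ⊢
          intro z
          rw [hP₀coe, Subgroup.mem_subgroupOf, Subgroup.mem_subgroupOf]
          have := hmem (z : H)
          simpa using this
        have hinf := hTI (h : H) hhH
        have hxP : (x : H) ∈ (P : Subgroup H) ⊓ (P : Subgroup H).map
            (MulAut.conj (h : H) : H →* H) := by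
          refine ⟨hx1, (y : H), hy, ?_⟩
          have := congrArg (fun w : ↥H₀ => (w : H)) hyx
          simpa using this
        rw [hinf, Subgroup.mem_bot] at hxP
        exact Subtype.ext hxP
      -- the normalizer of P₀ embeds into the normalizer of P
      obtain ⟨x₀, hx₀mem, hx₀ne⟩ : ∃ x₀ ∈ (P : Subgroup H).subgroupOf H₀, x₀ ≠ 1 := by
        by_contra hcon
        push_neg at hcon
        exact hPH₀ (Subgroup.eq_bot_iff_forall _ |>.mpr hcon)
      have hnormal : ∀ m : ↥H₀, m ∈ Subgroup.normalizer ((P₀ : Subgroup ↥H₀) : Set ↥H₀) →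
          (m : H) ∈ Subgroup.normalizer ((P : Subgroup H) : Set H) := by
        intro m hm
        by_contra hmN
        have hinf := hTI (m : H) hmN
        rw [Subgroup.mem_normalizer_iff] at hm
        have hx' : m * x₀ * m⁻¹ ∈ (P₀ : Subgroup ↥H₀) := (hm x₀).mp hx₀mem
        have hxP : ((m : H) * (x₀ : H) * (m : H)⁻¹) ∈ (P : Subgroup H) ⊓
            (P : Subgroup H).map (MulAut.conj (m : H) : H →* H) := by
          constructor
          · have : (((m * x₀ * m⁻¹ : ↥H₀)) : H) ∈ (P : Subgroup H) := hx'
            exact this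
          · exact ⟨(x₀ : H), hx₀mem, by simp [MulAut.conj_apply]⟩
        rw [hinf, Subgroup.mem_bot] at hxP
        apply hx₀ne
        have : (x₀ : H) = 1 := by
          have h1 : (m : H) * (x₀ : H) * (m : H)⁻¹ = 1 := hxP
          have := congrArg (fun w => (m : H)⁻¹ * w * (m : H)) h1
          simpa [mul_assoc] using this
        exact Subtype.ext (by simpa using this)
      -- 2-nilpotency of the normalizer of P₀
      set M := Subgroup.normalizer ((P₀ : Subgroup ↥H₀) : Set ↥H₀) with hM
      set φ : ↥M →* ↥(Subgroup.normalizer ((P : Subgroup H) : Set H)) :=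
        { toFun := fun m => ⟨((m : ↥H₀) : H), hnormal (m : ↥H₀) m.2⟩
          map_one' := rfl
          map_mul' := fun m₁ m₂ => rfl } with hφ
      have hφinj : Function.Injective φ := by
        intro m₁ m₂ hmeq
        have h2 := congrArg Subtype.val hmeq
        exact Subtype.ext (Subtype.ext h2)
      have hN₀ : ∃ K : Subgroup ↥M, K.Normal ∧ (Nat.card K).Coprime 2 ∧
          ∃ m : ℕ, K.index = 2 ^ m := by
        have h1 : IsPNilpotent 2 ↥φ.range := IsPNilpotent.subgroup Nat.prime_two φ.range hN
        exact IsPNilpotent.of_mulEquiv (MonoidHom.ofInjective hφinj).symm h1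
      exact isPNilpotent_of_normal H₀ ⟨a, ha⟩
        (ih (Nat.card ↥H₀) hlt ↥H₀ rfl P₀ hTI₀ hN₀)


/-- If a Sylow `2`-subgroup `P` of `H` is a T.I. subgroup and `N_H(P)` is
`2`-nilpotent, then `H` is `2`-nilpotent. -/
theorem twoNilpotent_of_TI_sylow
    {H : Type*} [Group H] [Finite H] (P : Sylow 2 H)
    (hTI : ∀ h : H, h ∉ Subgroup.normalizer ((P : Subgroup H) : Set H) →
      (P : Subgroup H) ⊓ (P : Subgroup H).map (MulAut.conj h : H →* H) = ⊥)
    (hN : IsPNilpotent 2 ↥(Subgroup.normalizer ((P : Subgroup H) : Set H))) :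
    IsPNilpotent 2 H :=
  twoNilpotent_aux (Nat.card H) H rfl P hTI hN
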